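/- arXiv:1907.01619 — 7 statements merged into one kernel-verified Lean document; each statement's English description precedes it below -/
import Mathlib

section
/- Suppose the Subset-Sum instance W = (w_0, w) with w ∈ ℕ^n is satisfiable, and let p_W(x) = (∑ᵢ wᵢxᵢ − w₀)² + λ·∑ᵢ xᵢ(1−xᵢ) for some λ > 0. Then the minimum of p_W over [0,1]^n equals 0, and this minimum is achieved exactly at the points x ∈ {0,1}^n satisfying ⟨w, x⟩ = w₀. -/
open Finset

/-- If the Subset-Sum instance `(w₀, w)` is satisfiable, then the minimum of
`p_W(x) = (∑ᵢ wᵢxᵢ − w₀)² + λ·∑ᵢ xᵢ(1−xᵢ)` over `[0,1]^n` is `0`, achieved exactly at the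
Boolean points `x ∈ {0,1}^n` with `⟨w,x⟩ = w₀`. -/
theorem subsetSum_deg2_minimum
    (n : ℕ) (hn : 1 ≤ n) (w0 : ℕ) (w : Fin n → ℕ) (lam : ℝ) (hlam : 0 < lam)
    (pW : (Fin n → ℝ) → ℝ)
    (hpW : ∀ x, pW x = (∑ i, (w i : ℝ) * x i - (w0 : ℝ)) ^ 2
        + lam * ∑ i, x i * (1 - x i))
    (hsat : ∃ x : Fin n → ℝ, (∀ i, x i = 0 ∨ x i = 1) ∧ ∑ i, (w i : ℝ) * x i = (w0 : ℝ)) :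
    IsLeast {y : ℝ | ∃ x : Fin n → ℝ, (∀ i, x i ∈ Set.Icc (0:ℝ) 1) ∧ pW x = y} 0 ∧
    ∀ x : Fin n → ℝ, (∀ i, x i ∈ Set.Icc (0:ℝ) 1) →
      (pW x = 0 ↔ ((∀ i, x i = 0 ∨ x i = 1) ∧ ∑ i, (w i : ℝ) * x i = (w0 : ℝ))) := by
  -- key equivalence
  have key : ∀ x : Fin n → ℝ, (∀ i, x i ∈ Set.Icc (0:ℝ) 1) →
      (pW x = 0 ↔ ((∀ i, x i = 0 ∨ x i = 1) ∧ ∑ i, (w i : ℝ) * x i = (w0 : ℝ))) := by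
    intro x hx
    have hterm : ∀ i ∈ Finset.univ, (0:ℝ) ≤ x i * (1 - x i) := by
      intro i _
      have h := hx i
      exact mul_nonneg h.1 (by linarith [h.2])
    have hsum : (0:ℝ) ≤ ∑ i, x i * (1 - x i) := Finset.sum_nonneg hterm
    constructor
    · intro h0
      rw [hpW x] at h0
      have hsq : (0:ℝ) ≤ (∑ i, (w i : ℝ) * x i - (w0 : ℝ)) ^ 2 := sq_nonneg _
      have h2 : lam * ∑ i, x i * (1 - x i) = 0 := by nlinarith
      have h2' : ∑ i, x i * (1 - x i) = 0 := by
        rcases mul_eq_zero.1 h2 with h | h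
        · exact absurd h (ne_of_gt hlam)
        · exact h
      have hall : ∀ i ∈ Finset.univ, x i * (1 - x i) = 0 :=
        (Finset.sum_eq_zero_iff_of_nonneg hterm).1 h2'
      constructor
      · intro i
        rcases mul_eq_zero.1 (hall i (Finset.mem_univ i)) with h | h
        · exact Or.inl h
        · exact Or.inr (by linarith)
      · have h1 : (∑ i, (w i : ℝ) * x i - (w0 : ℝ)) ^ 2 = 0 := by nlinarith
        have := pow_eq_zero_iff (n := 2) (by norm_num) |>.1 h1
        linarith
    · rintro ⟨hb, hs⟩
      rw [hpW x, hs]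
      have : ∑ i, x i * (1 - x i) = 0 := by
        apply Finset.sum_eq_zero
        intro i _
        rcases hb i with h | h <;> simp [h]
      simp [this]
  refine ⟨⟨?_, ?_⟩, key⟩
  · obtain ⟨x, hb, hs⟩ := hsat
    refine ⟨x, fun i => ?_, ?_⟩
    · rcases hb i with h | h <;> simp [h]
    · exact (key x (fun i => by rcases hb i with h | h <;> simp [h])).2 ⟨hb, hs⟩
  · rintro y ⟨x, hx, rfl⟩
    rw [hpW x]
    have hsum : (0:ℝ) ≤ ∑ i, x i * (1 - x i) := by
      apply Finset.sum_nonneg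
      intro i _
      have h := hx i
      exact mul_nonneg h.1 (by linarith [h.2])
    nlinarith [sq_nonneg (∑ i, (w i : ℝ) * x i - (w0 : ℝ))]
end

section
/- Let p_W(x) = (∑ᵢ wᵢxᵢ − w₀)² + λ·B(x) with B(x) = ∑ᵢ xᵢ(1−xᵢ) and λ > 2. Let α be the smaller root of X(1−X) = 1/(2λ), i.e., α = (1 − √(1 − 2/λ))/2. If x ∈ [0,1]^n has ℓ₁ distance strictly greater than α from every point of {0,1}^n, then p_W(x) > 1/2. -/
open Finset

/-- with `λ > 2` and `α = (1 − √(1 − 2/λ))/2`, any `x ∈ [0,1]^n` at ℓ₁ distance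
strictly greater than `α` from every Boolean point satisfies `p_W(x) > 1/2`. -/
theorem subsetSum_deg2_far_from_boolean
    (n : ℕ) (hn : 1 ≤ n) (w0 : ℕ) (w : Fin n → ℕ) (lam : ℝ) (hlam : 2 < lam)
    (α : ℝ) (hα : α = (1 - Real.sqrt (1 - 2 / lam)) / 2)
    (pW : (Fin n → ℝ) → ℝ)
    (hpW : ∀ x, pW x = (∑ i, (w i : ℝ) * x i - (w0 : ℝ)) ^ 2
        + lam * ∑ i, x i * (1 - x i))
    (x : Fin n → ℝ) (hx : ∀ i, x i ∈ Set.Icc (0:ℝ) 1)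
    (hfar : ∀ z : Fin n → ℝ, (∀ i, z i = 0 ∨ z i = 1) → α < ∑ i, |x i - z i|) :
    1 / 2 < pW x := by
  have hlam0 : (0:ℝ) < lam := by linarith
  set s := Real.sqrt (1 - 2 / lam) with hs
  have h2lam : (0:ℝ) < 2 / lam := by positivity
  have h1 : (0:ℝ) ≤ 1 - 2 / lam := by
    rw [sub_nonneg, div_le_one hlam0]; linarith
  have hs2 : s ^ 2 = 1 - 2 / lam := Real.sq_sqrt h1
  have hs0 : 0 ≤ s := Real.sqrt_nonneg _
  have hs1 : s < 1 := by nlinarith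
  have hα0 : 0 < α := by rw [hα]; linarith
  have hαhalf : α < 1 / 2 := by
    rw [hα]
    have : 0 < s := Real.sqrt_pos.mpr (by rw [sub_pos, div_lt_one hlam0]; linarith)
    linarith
  have hαlam : lam * (α * (1 - α)) = 1 / 2 := by
    rw [hα]
    have hl : lam ≠ 0 := ne_of_gt hlam0
    field_simp at hs2 ⊢
    nlinarith [hs2]
  -- rounding point
  set z : Fin n → ℝ := fun i => if x i ≤ 1 / 2 then 0 else 1 with hzdef
  have hz : ∀ i, z i = 0 ∨ z i = 1 := by
    intro i
    by_cases h : x i ≤ 1 / 2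
    · left; simp only [hzdef]; rw [if_pos h]
    · right; simp only [hzdef]; rw [if_neg h]
  have hdsum := hfar z hz
  set d : Fin n → ℝ := fun i => |x i - z i| with hddef
  have hkey : ∀ i, 0 ≤ d i ∧ d i ≤ 1 / 2 ∧ x i * (1 - x i) = d i * (1 - d i) := by
    intro i
    obtain ⟨hx0, hx1⟩ := hx i
    by_cases h : x i ≤ 1 / 2
    · have hdi : d i = x i := by
        simp only [hddef, hzdef, if_pos h, sub_zero, abs_of_nonneg hx0]
      refine ⟨by rw [hdi]; exact hx0, by rw [hdi]; exact h, by rw [hdi]⟩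
    · push_neg at h
      have hdi : d i = 1 - x i := by
        simp only [hddef, hzdef, if_neg (not_le.mpr h)]
        rw [abs_of_nonpos (by linarith)]; ring
      refine ⟨by rw [hdi]; linarith, by rw [hdi]; linarith, by rw [hdi]; ring⟩
  have hBeq : ∑ i, x i * (1 - x i) = ∑ i, d i * (1 - d i) :=
    Finset.sum_congr rfl fun i _ => (hkey i).2.2
  have hmain : α * (1 - α) < ∑ i, d i * (1 - d i) := by
    by_cases hcase : ∀ i, d i ≤ α
    · have h1 : ∑ i, (1 - α) * d i ≤ ∑ i, d i * (1 - d i) := by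
        apply Finset.sum_le_sum
        intro i _
        obtain ⟨h0, _, _⟩ := hkey i
        nlinarith [hcase i]
      have h2 : (1 - α) * α < (1 - α) * ∑ i, d i := by
        apply mul_lt_mul_of_pos_left hdsum (by linarith)
      rw [← Finset.mul_sum] at h1
      nlinarith
    · push_neg at hcase
      obtain ⟨j, hj⟩ := hcase
      have hjj : d j * (1 - d j) ≤ ∑ i, d i * (1 - d i) := by
        apply Finset.single_le_sum (fun i _ => ?_) (Finset.mem_univ j)
        obtain ⟨h0, h12, _⟩ := hkey i
        nlinarith
      obtain ⟨_, hj12, _⟩ := hkey j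
      nlinarith
  rw [hpW, hBeq]
  have hsq : 0 ≤ (∑ i, (w i : ℝ) * x i - (w0 : ℝ)) ^ 2 := sq_nonneg _
  have : lam * (α * (1 - α)) < lam * ∑ i, d i * (1 - d i) :=
    mul_lt_mul_of_pos_left hmain hlam0
  linarith
end

section
/- Let W = (w₀, w) be a Subset-Sum instance with positive-integer-relevant constraint that z is not a solution, and let p_W(x) = (∑ᵢ wᵢxᵢ − w₀)² + λB(x) with λ ≥ 0. If x ∈ [0,1]^n is within ℓ₁ distance 1/(4‖w‖₂) of some z ∈ {0,1}^n with ∑ᵢ wᵢzᵢ ≠ w₀, then p_W(x) > 1/2. -/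
open Finset

/-- if `x ∈ [0,1]^n` is within ℓ₁ distance `1/(4‖w‖₂)` of a Boolean point `z`
which is not a solution of the Subset-Sum instance, then `p_W(x) > 1/2`. -/
theorem subsetSum_deg2_close_to_nonsolution
    (n : ℕ) (hn : 1 ≤ n) (w0 : ℕ) (w : Fin n → ℕ) (hw : w ≠ 0)
    (lam : ℝ) (hlam : 0 ≤ lam)
    (pW : (Fin n → ℝ) → ℝ)
    (hpW : ∀ x, pW x = (∑ i, (w i : ℝ) * x i - (w0 : ℝ)) ^ 2
        + lam * ∑ i, x i * (1 - x i))
    (x : Fin n → ℝ) (hx : ∀ i, x i ∈ Set.Icc (0:ℝ) 1)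
    (z : Fin n → ℝ) (hz : ∀ i, z i = 0 ∨ z i = 1)
    (hznot : ∑ i, (w i : ℝ) * z i ≠ (w0 : ℝ))
    (hclose : ∑ i, |x i - z i| ≤ 1 / (4 * Real.sqrt (∑ i, ((w i : ℝ)) ^ 2))) :
    1 / 2 < pW x := by
  set S := Real.sqrt (∑ i, ((w i : ℝ)) ^ 2) with hSdef
  -- S > 0
  have hwpos : (0:ℝ) < ∑ i, ((w i : ℝ)) ^ 2 := by
    obtain ⟨j, hj⟩ : ∃ j, w j ≠ 0 := by
      by_contra h
      push_neg at h
      exact hw (funext fun j => h j)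
    have : (0:ℝ) < ((w j : ℝ)) ^ 2 := by positivity
    refine lt_of_lt_of_le this ?_
    exact Finset.single_le_sum (f := fun i => ((w i:ℝ))^2) (fun i _ => by positivity) (Finset.mem_univ j)
  have hS : 0 < S := Real.sqrt_pos.mpr hwpos
  -- the boolean sum is an integer
  obtain ⟨m, hm⟩ : ∃ m : ℤ, (∑ i, (w i : ℝ) * z i) = (m : ℝ) := by
    refine ⟨∑ i, if z i = 1 then (w i : ℤ) else 0, ?_⟩
    push_cast
    refine Finset.sum_congr rfl fun i _ => ?_
    rcases hz i with h | h <;> simp [h]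
  have hgap : (1:ℝ) ≤ |∑ i, (w i : ℝ) * z i - (w0 : ℝ)| := by
    rw [hm]
    have hne : m ≠ (w0 : ℤ) := by
      intro h; apply hznot; rw [hm, h]; push_cast; ring
    have : (1:ℤ) ≤ |m - (w0 : ℤ)| := by
      exact Int.one_le_abs (sub_ne_zero.mpr hne)
    have h4 : (1:ℝ) ≤ |((m - (w0:ℤ) : ℤ) : ℝ)| := by
      rw [← Int.cast_abs]; exact_mod_cast this
    push_cast at h4 ⊢
    convert h4 using 2
  -- bound the perturbation
  have hpert : |∑ i, (w i : ℝ) * x i - ∑ i, (w i : ℝ) * z i| ≤ 1/4 := by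
    have h1 : |∑ i, (w i : ℝ) * x i - ∑ i, (w i : ℝ) * z i|
        = |∑ i, (w i : ℝ) * (x i - z i)| := by
      rw [← Finset.sum_sub_distrib]; congr 1; apply Finset.sum_congr rfl; intros; ring
    rw [h1]
    calc |∑ i, (w i : ℝ) * (x i - z i)| ≤ ∑ i, |(w i : ℝ) * (x i - z i)| :=
          Finset.abs_sum_le_sum_abs _ _
      _ ≤ ∑ i, S * |x i - z i| := by
          refine Finset.sum_le_sum fun i _ => ?_
          rw [abs_mul, abs_of_nonneg (by positivity : (0:ℝ) ≤ (w i : ℝ))]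
          refine mul_le_mul_of_nonneg_right ?_ (abs_nonneg _)
          rw [hSdef]
          have h2 : ((w i : ℝ))^2 ≤ ∑ k, ((w k : ℝ))^2 :=
            Finset.single_le_sum (f := fun k => ((w k:ℝ))^2) (fun k _ => by positivity) (Finset.mem_univ i)
          calc (w i : ℝ) = Real.sqrt (((w i : ℝ))^2) := (Real.sqrt_sq (by positivity)).symm
            _ ≤ Real.sqrt (∑ k, ((w k : ℝ))^2) := Real.sqrt_le_sqrt h2
      _ = S * ∑ i, |x i - z i| := by rw [Finset.mul_sum]
      _ ≤ S * (1 / (4 * S)) := mul_le_mul_of_nonneg_left hclose hS.le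
      _ = 1/4 := by field_simp
  -- main sum far from w0
  have hfar : (3:ℝ)/4 ≤ |∑ i, (w i : ℝ) * x i - (w0 : ℝ)| := by
    have := abs_sub_abs_le_abs_sub (∑ i, (w i : ℝ) * z i - (w0 : ℝ))
      (∑ i, (w i : ℝ) * z i - ∑ i, (w i : ℝ) * x i)
    have h2 : |∑ i, (w i : ℝ) * z i - ∑ i, (w i : ℝ) * x i| ≤ 1/4 := by
      rw [abs_sub_comm]; exact hpert
    have h3 : (∑ i, (w i : ℝ) * z i - (w0:ℝ)) - (∑ i, (w i : ℝ) * z i - ∑ i, (w i : ℝ) * x i)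
        = ∑ i, (w i : ℝ) * x i - (w0:ℝ) := by ring
    rw [h3] at this
    linarith
  have hB : 0 ≤ ∑ i, x i * (1 - x i) := by
    refine Finset.sum_nonneg fun i _ => ?_
    obtain ⟨h0, h1⟩ := hx i
    nlinarith
  rw [hpW]
  have hsq : (3/4:ℝ)^2 ≤ (∑ i, (w i : ℝ) * x i - (w0 : ℝ))^2 := by
    calc (3/4:ℝ)^2 ≤ |∑ i, (w i : ℝ) * x i - (w0 : ℝ)|^2 := by
          apply pow_le_pow_left₀ (by norm_num) hfar
      _ = (∑ i, (w i : ℝ) * x i - (w0 : ℝ))^2 := sq_abs _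
  nlinarith [mul_nonneg hlam hB]
end

section
/- Let p_W(x) = (∑ᵢ wᵢxᵢ − w₀)² + λB(x) with B(x) = ∑ᵢ xᵢ(1−xᵢ) and λ = M‖w‖₂ for some M > 0. Let β = (√(M²+2) − M)/(2‖w‖₂), i.e., β‖w‖₂ is the positive root of X² + MX = 1/2. If x ∈ [0,1]^n is within ℓ₁ distance β of some z ∈ {0,1}^n with ∑ᵢ wᵢzᵢ = w₀, then p_W(x) ≤ 1/2. -/
open Finset

/-- with `λ = M‖w‖₂` and `β = (√(M²+2) − M)/(2‖w‖₂)`, if `x ∈ [0,1]^n` is within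
ℓ₁ distance `β` of a Boolean solution `z` of the Subset-Sum instance, then `p_W(x) ≤ 1/2`. -/
theorem subsetSum_deg2_close_to_solution
    (n : ℕ) (hn : 1 ≤ n) (w0 : ℕ) (w : Fin n → ℕ)
    (M lam β : ℝ) (hM : 0 < M)
    (hwpos : 0 < Real.sqrt (∑ i, ((w i : ℝ)) ^ 2))
    (hlam : lam = M * Real.sqrt (∑ i, ((w i : ℝ)) ^ 2))
    (hβ : β = (Real.sqrt (M ^ 2 + 2) - M) / (2 * Real.sqrt (∑ i, ((w i : ℝ)) ^ 2)))
    (pW : (Fin n → ℝ) → ℝ)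
    (hpW : ∀ x, pW x = (∑ i, (w i : ℝ) * x i - (w0 : ℝ)) ^ 2
        + lam * ∑ i, x i * (1 - x i))
    (x : Fin n → ℝ) (hx : ∀ i, x i ∈ Set.Icc (0:ℝ) 1)
    (z : Fin n → ℝ) (hz : ∀ i, z i = 0 ∨ z i = 1)
    (hzsol : ∑ i, (w i : ℝ) * z i = (w0 : ℝ))
    (hclose : ∑ i, |x i - z i| ≤ β) :
    pW x ≤ 1 / 2 := by
  set S := Real.sqrt (∑ i, ((w i : ℝ)) ^ 2) with hSdef
  set d := ∑ i, |x i - z i| with hddef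
  have hd0 : 0 ≤ d := Finset.sum_nonneg fun i _ => abs_nonneg _
  have hwle : ∀ i, (w i : ℝ) ≤ S := by
    intro i
    have h1 : ((w i : ℝ)) ^ 2 ≤ ∑ j, ((w j : ℝ)) ^ 2 :=
      Finset.single_le_sum (f := fun j => ((w j : ℝ)) ^ 2) (fun j _ => sq_nonneg _) (Finset.mem_univ i)
    have h2 := Real.sqrt_le_sqrt h1
    rwa [Real.sqrt_sq (by positivity)] at h2
  have h1 : |∑ i, (w i : ℝ) * x i - (w0 : ℝ)| ≤ S * d := by
    have he : ∑ i, (w i : ℝ) * x i - (w0 : ℝ) = ∑ i, (w i : ℝ) * (x i - z i) := by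
      rw [← hzsol, ← Finset.sum_sub_distrib]
      exact Finset.sum_congr rfl fun i _ => by ring
    rw [he, hddef, Finset.mul_sum]
    calc |∑ i, (w i : ℝ) * (x i - z i)| ≤ ∑ i, |(w i : ℝ) * (x i - z i)| :=
          Finset.abs_sum_le_sum_abs _ _
      _ ≤ ∑ i, S * |x i - z i| := Finset.sum_le_sum fun i _ => by
          rw [abs_mul, abs_of_nonneg (by positivity : (0:ℝ) ≤ (w i : ℝ))]
          exact mul_le_mul_of_nonneg_right (hwle i) (abs_nonneg _)
  have h2 : ∑ i, x i * (1 - x i) ≤ d := by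
    apply Finset.sum_le_sum
    intro i _
    obtain ⟨hx0, hx1⟩ := hx i
    rcases hz i with h | h <;> rw [h]
    · rw [sub_zero, abs_of_nonneg hx0]; nlinarith
    · rw [abs_sub_comm, abs_of_nonneg (by linarith)]; nlinarith
  have hsq : Real.sqrt (M ^ 2 + 2) ^ 2 = M ^ 2 + 2 := Real.sq_sqrt (by positivity)
  have hsqge : M ≤ Real.sqrt (M ^ 2 + 2) := by
    nlinarith [Real.sqrt_nonneg (M ^ 2 + 2)]
  have hβS : S * β = (Real.sqrt (M ^ 2 + 2) - M) / 2 := by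
    rw [hβ]; field_simp
  have habs := abs_nonneg (∑ i, (w i : ℝ) * x i - (w0 : ℝ))
  have hSd : S * d ≤ S * β := mul_le_mul_of_nonneg_left hclose (le_of_lt hwpos)
  have hA2 : (∑ i, (w i : ℝ) * x i - (w0 : ℝ)) ^ 2 ≤ (S * d) ^ 2 := by
    have := sq_abs (∑ i, (w i : ℝ) * x i - (w0 : ℝ))
    nlinarith
  have hSd0 : 0 ≤ S * d := mul_nonneg (le_of_lt hwpos) hd0
  have hlamB : lam * ∑ i, x i * (1 - x i) ≤ M * (S * d) := by
    rw [hlam, mul_assoc]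
    apply mul_le_mul_of_nonneg_left _ (le_of_lt hM)
    exact mul_le_mul_of_nonneg_left h2 (le_of_lt hwpos)
  rw [hpW]
  have hfin : (S * β) ^ 2 + M * (S * β) = 1 / 2 := by
    rw [hβS]; nlinarith
  have hp2 : (S * d) ^ 2 ≤ (S * β) ^ 2 := pow_le_pow_left₀ hSd0 hSd 2
  have hp3 : M * (S * d) ≤ M * (S * β) := mul_le_mul_of_nonneg_left hSd (le_of_lt hM)
  linarith
end

section
/- Let p_W(x) = (∑ᵢ wᵢxᵢ − w₀)² + λ∑ᵢ(xᵢ²−1)² with integer w₀ and wᵢ, w ≠ 0, λ ≥ 0. If x ∈ ℝ^n is within ℓ₂ distance 1/(4‖w‖₂) of some z ∈ {−1,1}^n with ∑ᵢ wᵢzᵢ ≠ w₀, then p_W(x) ≥ 9/16 > 1/2. -/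
open Finset

/-- if `x ∈ ℝ^n` is within ℓ₂ distance `1/(4‖w‖₂)` of a point `z ∈ {−1,1}^n`
which is not a solution of the Subset-Sum instance, then `p_W(x) ≥ 9/16 > 1/2`. -/
theorem subsetSum_deg4_close_to_nonsolution
    (n : ℕ) (hn : 1 ≤ n) (w0 : ℤ) (w : Fin n → ℤ) (hw : w ≠ 0)
    (lam : ℝ) (hlam : 0 ≤ lam)
    (pW : (Fin n → ℝ) → ℝ)
    (hpW : ∀ x, pW x = (∑ i, (w i : ℝ) * x i - (w0 : ℝ)) ^ 2
        + lam * ∑ i, (x i ^ 2 - 1) ^ 2)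
    (x : Fin n → ℝ) (z : Fin n → ℝ) (hz : ∀ i, z i = -1 ∨ z i = 1)
    (hznot : ∑ i, (w i : ℝ) * z i ≠ (w0 : ℝ))
    (hclose : Real.sqrt (∑ i, (x i - z i) ^ 2) ≤ 1 / (4 * Real.sqrt (∑ i, ((w i : ℝ)) ^ 2))) :
    9 / 16 ≤ pW x ∧ (1:ℝ) / 2 < 9 / 16 := by
  refine ⟨?_, by norm_num⟩
  -- integer values of z
  set zi : Fin n → ℤ := fun i => if z i = 1 then 1 else -1 with hzi
  have hzcast : ∀ i, z i = ((zi i : ℤ) : ℝ) := by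
    intro i
    rcases hz i with h | h <;> simp [hzi, h] <;> norm_num
  have hSint : ∑ i, (w i : ℝ) * z i = ((∑ i, w i * zi i : ℤ) : ℝ) := by
    push_cast
    exact Finset.sum_congr rfl fun i _ => by rw [hzcast i]
  -- |S - w0| ≥ 1
  have hne : (∑ i, w i * zi i : ℤ) ≠ w0 := by
    intro h
    apply hznot
    rw [hSint, h]
  have h1 : (1 : ℝ) ≤ |∑ i, (w i : ℝ) * z i - (w0 : ℝ)| := by
    rw [hSint]
    have : ((∑ i, w i * zi i : ℤ) : ℝ) - (w0 : ℝ) = (((∑ i, w i * zi i) - w0 : ℤ) : ℝ) := by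
      push_cast; ring
    rw [this, ← Int.cast_abs]
    exact_mod_cast Int.one_le_abs (sub_ne_zero.mpr hne)
  -- positivity of ∑ w²
  have hwpos : 0 < ∑ i, ((w i : ℝ)) ^ 2 := by
    obtain ⟨j, hj⟩ := Function.ne_iff.mp hw
    have : (0:ℝ) < ((w j : ℝ)) ^ 2 := by
      have : (w j : ℝ) ≠ 0 := by exact_mod_cast hj
      positivity
    calc (0:ℝ) = ∑ _i : Fin n, (0:ℝ) := by simp
      _ < ∑ i, ((w i : ℝ)) ^ 2 :=
          Finset.sum_lt_sum (fun i _ => by positivity) ⟨j, Finset.mem_univ j, this⟩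
  have hsqw : 0 < Real.sqrt (∑ i, ((w i : ℝ)) ^ 2) := Real.sqrt_pos.mpr hwpos
  -- Cauchy-Schwarz bound
  have hCS : |∑ i, (w i : ℝ) * (x i - z i)| ≤ 1 / 4 := by
    have h2 := Finset.sum_mul_sq_le_sq_mul_sq Finset.univ (fun i => (w i : ℝ))
      (fun i => x i - z i)
    have habs : |∑ i, (w i : ℝ) * (x i - z i)| ≤
        Real.sqrt (∑ i, ((w i : ℝ)) ^ 2) * Real.sqrt (∑ i, (x i - z i) ^ 2) := by
      rw [← Real.sqrt_mul_self (abs_nonneg _)] at *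
      rw [← Real.sqrt_mul (by positivity)]
      apply Real.sqrt_le_sqrt
      rw [abs_mul_abs_self]
      calc (∑ i, (w i : ℝ) * (x i - z i)) * (∑ i, (w i : ℝ) * (x i - z i))
          = (∑ i, (w i : ℝ) * (x i - z i)) ^ 2 := (sq _).symm
        _ ≤ (∑ i, ((w i : ℝ)) ^ 2) * (∑ i, (x i - z i) ^ 2) := h2
    calc |∑ i, (w i : ℝ) * (x i - z i)|
        ≤ Real.sqrt (∑ i, ((w i : ℝ)) ^ 2) * Real.sqrt (∑ i, (x i - z i) ^ 2) := habs
      _ ≤ Real.sqrt (∑ i, ((w i : ℝ)) ^ 2) * (1 / (4 * Real.sqrt (∑ i, ((w i : ℝ)) ^ 2))) := by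
          exact mul_le_mul_of_nonneg_left hclose (Real.sqrt_nonneg _)
      _ = 1 / 4 := by field_simp
  -- |∑ wᵢxᵢ − w₀| ≥ 3/4
  have hkey : (3:ℝ) / 4 ≤ |∑ i, (w i : ℝ) * x i - (w0 : ℝ)| := by
    have hsplit : ∑ i, (w i : ℝ) * x i - (w0 : ℝ)
        = (∑ i, (w i : ℝ) * z i - (w0 : ℝ)) + ∑ i, (w i : ℝ) * (x i - z i) := by
      simp only [mul_sub, Finset.sum_sub_distrib]
      ring
    rw [hsplit]
    have := abs_sub_abs_le_abs_sub (∑ i, (w i : ℝ) * z i - (w0 : ℝ))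
      (-(∑ i, (w i : ℝ) * (x i - z i)))
    have habs2 : |∑ i, (w i : ℝ) * z i - (w0 : ℝ)| - |∑ i, (w i : ℝ) * (x i - z i)|
        ≤ |(∑ i, (w i : ℝ) * z i - (w0 : ℝ)) + ∑ i, (w i : ℝ) * (x i - z i)| := by
      simpa [sub_neg_eq_add, abs_neg] using this
    linarith
  have hsq : (9:ℝ) / 16 ≤ (∑ i, (w i : ℝ) * x i - (w0 : ℝ)) ^ 2 := by
    calc (9:ℝ)/16 = ((3:ℝ)/4)^2 := by norm_num
      _ ≤ |∑ i, (w i : ℝ) * x i - (w0 : ℝ)| ^ 2 := by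
          apply pow_le_pow_left₀ (by norm_num) hkey
      _ = (∑ i, (w i : ℝ) * x i - (w0 : ℝ)) ^ 2 := sq_abs _
  rw [hpW]
  have hterm : 0 ≤ lam * ∑ i, (x i ^ 2 - 1) ^ 2 := by positivity
  linarith
end

section
/- Let λ > 0 and β > 0 satisfy (‖w‖₂² + λ(2+β)²)·β² = 1/2. Let p_W(x) = (∑ᵢ wᵢxᵢ − w₀)² + λ∑ᵢ(xᵢ²−1)². If x ∈ ℝ^n satisfies ‖x − z‖₂ ≤ β for some z ∈ {−1,1}^n with ∑ᵢ wᵢzᵢ = w₀, then p_W(x) ≤ 1/2. -/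
open Finset

/-- with `β > 0` satisfying `(‖w‖₂² + λ(2+β)²)β² = 1/2`, if `x` is within ℓ₂
distance `β` of a point `z ∈ {−1,1}^n` with `⟨w,z⟩ = w₀`, then `p_W(x) ≤ 1/2`. -/
theorem subsetSum_deg4_close_to_solution
    (n : ℕ) (hn : 1 ≤ n) (w0 : ℤ) (w : Fin n → ℝ)
    (lam β : ℝ) (hlam : 0 < lam) (hβpos : 0 < β)
    (hβ : ((∑ i, (w i) ^ 2) + lam * (2 + β) ^ 2) * β ^ 2 = 1 / 2)
    (pW : (Fin n → ℝ) → ℝ)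
    (hpW : ∀ x, pW x = (∑ i, w i * x i - (w0 : ℝ)) ^ 2
        + lam * ∑ i, (x i ^ 2 - 1) ^ 2)
    (x : Fin n → ℝ) (z : Fin n → ℝ) (hz : ∀ i, z i = -1 ∨ z i = 1)
    (hzsol : ∑ i, w i * z i = (w0 : ℝ))
    (hclose : Real.sqrt (∑ i, (x i - z i) ^ 2) ≤ β) :
    pW x ≤ 1 / 2 := by
  rw [hpW]
  set D := ∑ i, (x i - z i) ^ 2 with hDdef
  have hDnn : 0 ≤ D := Finset.sum_nonneg fun i _ => sq_nonneg _
  have hD : D ≤ β ^ 2 := by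
    nlinarith [Real.sq_sqrt hDnn, Real.sqrt_nonneg D]
  have h1 : (∑ i, w i * x i - (w0 : ℝ)) ^ 2 ≤ (∑ i, (w i) ^ 2) * D := by
    have he : ∑ i, w i * x i - (w0 : ℝ) = ∑ i, w i * (x i - z i) := by
      rw [← hzsol, ← Finset.sum_sub_distrib]
      congr 1; funext i; ring
    rw [he]
    exact Finset.sum_mul_sq_le_sq_mul_sq univ w (fun i => x i - z i)
  have h2 : ∑ i, (x i ^ 2 - 1) ^ 2 ≤ (2 + β) ^ 2 * D := by
    rw [hDdef, Finset.mul_sum]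
    apply Finset.sum_le_sum
    intro i _
    have hi : (x i - z i) ^ 2 ≤ β ^ 2 := by
      refine le_trans ?_ hD
      exact Finset.single_le_sum (f := fun j => (x j - z j) ^ 2)
        (fun j _ => sq_nonneg _) (Finset.mem_univ i)
    rcases hz i with h | h <;> rw [h] at hi ⊢
    · have hu1 : x i + 1 ≤ β := by nlinarith
      have hu2 : -β ≤ x i + 1 := by nlinarith
      nlinarith [mul_nonneg (mul_nonneg (sq_nonneg (x i + 1))
        (by linarith : (0:ℝ) ≤ β + 4 - (x i + 1))) (by linarith : (0:ℝ) ≤ β + (x i + 1))]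
    · have hu1 : x i - 1 ≤ β := by nlinarith
      have hu2 : -β ≤ x i - 1 := by nlinarith
      nlinarith [mul_nonneg (mul_nonneg (sq_nonneg (x i - 1))
        (by linarith : (0:ℝ) ≤ β - (x i - 1))) (by linarith : (0:ℝ) ≤ β + 4 + (x i - 1))]
  have hw : 0 ≤ ∑ i, (w i) ^ 2 := Finset.sum_nonneg fun i _ => sq_nonneg _
  nlinarith [sq_nonneg (2 + β), mul_le_mul_of_nonneg_left h2 hlam.le,
    mul_le_mul_of_nonneg_left hD hw, mul_le_mul_of_nonneg_left hD (mul_nonneg hlam.le (sq_nonneg (2 + β)))]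
end

section
/- Let B(x) = ∑_{i=1}^n (xᵢ²−1)² and, for x ∈ ℝ^n, let x* ∈ {−1,1}^n be the coordinatewise sign of x. Suppose λ ≥ 1 and let α ∈ (0, 1/2) be the smallest positive solution of 4(1−X)²X² = 1/(2λ). If ‖x − z‖₂ > α for every z ∈ {−1,1}^n, then B(x) > 1/(2λ). -/
open Finset

/-- with `λ ≥ 1` and `α ∈ (0,1/2)` the smallest positive solution of
`4(1−X)²X² = 1/(2λ)`, if `x ∈ ℝ^n` is at ℓ₂ distance `> α` from every point of `{−1,1}^n`,
then `B(x) = ∑ᵢ(xᵢ²−1)² > 1/(2λ)`. -/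
theorem deg4_penalty_far_from_boolean
    (n : ℕ) (lam α : ℝ) (hlam : 1 ≤ lam)
    (hαmem : α ∈ Set.Ioo (0:ℝ) (1/2))
    (hαleast : IsLeast {t : ℝ | 0 < t ∧ 4 * (1 - t) ^ 2 * t ^ 2 = 1 / (2 * lam)} α)
    (x : Fin n → ℝ)
    (hfar : ∀ z : Fin n → ℝ, (∀ i, z i = -1 ∨ z i = 1) →
      α < Real.sqrt (∑ i, (x i - z i) ^ 2)) :
    1 / (2 * lam) < ∑ i, (x i ^ 2 - 1) ^ 2 := by
  obtain ⟨hα0, hα12⟩ := hαmem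
  have heq : 4 * (1 - α) ^ 2 * α ^ 2 = 1 / (2 * lam) := hαleast.1.2
  set z : Fin n → ℝ := fun i => if 0 ≤ x i then 1 else -1 with hz
  have hzb : ∀ i, z i = -1 ∨ z i = 1 := by
    intro i; by_cases h : 0 ≤ x i <;> simp [hz, h]
  have hxz : ∀ i, 0 ≤ x i * z i := by
    intro i; by_cases h : 0 ≤ x i <;> simp [hz, h] <;> nlinarith
  have hz2 : ∀ i, z i ^ 2 = 1 := by
    intro i; rcases hzb i with h | h <;> simp [h]
  have hS : α ^ 2 < ∑ i, (x i - z i) ^ 2 := by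
    have h1 := hfar z hzb
    have h2 : (0:ℝ) ≤ ∑ i, (x i - z i) ^ 2 :=
      Finset.sum_nonneg fun i _ => sq_nonneg _
    nlinarith [Real.sq_sqrt h2, Real.sqrt_nonneg (∑ i, (x i - z i) ^ 2)]
  by_cases hcase : ∀ i, (x i - z i) ^ 2 ≤ 4 * α ^ 2
  · -- Case 2: all coordinates close
    have hterm : ∀ i ∈ Finset.univ, 4 * (1 - α) ^ 2 * (x i - z i) ^ 2 ≤ (x i ^ 2 - 1) ^ 2 := by
      intro i _
      have h1 := hcase i
      by_cases h : 0 ≤ x i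
      · have hzi : z i = 1 := by simp [hz, h]
        rw [hzi] at h1 ⊢
        have hx1 : 1 - 2 * α ≤ x i := by nlinarith
        have h5 : 4 * (1 - α) ^ 2 ≤ (x i + 1) ^ 2 := by nlinarith
        nlinarith [mul_le_mul_of_nonneg_left h5 (sq_nonneg (x i - 1))]
      · have hzi : z i = -1 := by simp [hz, h]
        rw [hzi] at h1 ⊢
        push_neg at h
        have hx1 : x i ≤ -(1 - 2 * α) := by nlinarith
        have h5 : 4 * (1 - α) ^ 2 ≤ (x i - 1) ^ 2 := by nlinarith
        nlinarith [mul_le_mul_of_nonneg_left h5 (sq_nonneg (x i + 1))]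
    calc 1 / (2 * lam) = 4 * (1 - α) ^ 2 * α ^ 2 := heq.symm
      _ < 4 * (1 - α) ^ 2 * ∑ i, (x i - z i) ^ 2 := by
          apply mul_lt_mul_of_pos_left hS
          nlinarith
      _ = ∑ i, 4 * (1 - α) ^ 2 * (x i - z i) ^ 2 := by rw [Finset.mul_sum]
      _ ≤ ∑ i, (x i ^ 2 - 1) ^ 2 := Finset.sum_le_sum hterm
  · -- Case 1: some coordinate far
    push_neg at hcase
    obtain ⟨i, hi⟩ := hcase
    have hbig : 1 / (2 * lam) < (x i ^ 2 - 1) ^ 2 := by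
      rw [← heq]
      have h2 := hz2 i
      have h3 := hxz i
      have h4 : 1 ≤ (x i + z i) ^ 2 := by nlinarith [sq_nonneg (x i)]
      have hsq : (x i ^ 2 - 1) ^ 2 = (x i - z i) ^ 2 * (x i + z i) ^ 2 := by
        have hfac : x i ^ 2 - 1 = (x i - z i) * (x i + z i) := by linear_combination h2
        rw [hfac]; ring
      rw [hsq]
      nlinarith [mul_le_mul_of_nonneg_left h4 (sq_nonneg (x i - z i)), mul_pos (mul_pos hα0 hα0) hα0]
    calc 1 / (2 * lam) < (x i ^ 2 - 1) ^ 2 := hbig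
      _ ≤ ∑ j, (x j ^ 2 - 1) ^ 2 :=
          Finset.single_le_sum (f := fun j => (x j ^ 2 - 1) ^ 2) (fun j _ => sq_nonneg _) (Finset.mem_univ i)
end
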